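/- For B = K[Z_n] with twist J = Σ_k e_k ⊗ x^k, the element J' = (e₁ ⊗ e₂)(J) = Σ_{k=0}^{n-1} (e_k ⊗ 1) ⊗ (1 ⊗ x^k) is a twist for the bialgebra B ⊗ B, i.e., (Δ_{B⊗B} ⊗ id)(J')(J' ⊗ 1) = (id ⊗ Δ_{B⊗B})(J')(1 ⊗ J'). -/

import Mathlib

set_option linter.unusedSectionVars false
set_option synthInstance.maxHeartbeats 1000000

open MonoidAlgebra Finset
open scoped TensorProduct

noncomputable section

variable (K : Type*) [CommRing K] (G : Type*) [CommGroup G]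

namespace GroupBialgebra

instance instCoalgebra : Coalgebra K (MonoidAlgebra K G) :=
  MonoidAlgebra.instCoalgebra K K G

variable {K G}

lemma comul_single (g : G) (c : K) :
    Coalgebra.comul (R := K) (MonoidAlgebra.single g c) =
      MonoidAlgebra.single g (1 : K) ⊗ₜ[K] MonoidAlgebra.single g c := by
  have h := MonoidAlgebra.comul_single (R := K) g c
  simp only [CommSemiring.comul_apply, TensorProduct.map_tmul, MonoidAlgebra.lsingle_apply] at h
  exact h

lemma counit_single (g : G) (c : K) :
    Coalgebra.counit (R := K) (MonoidAlgebra.single g c) = c := by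
  have h := MonoidAlgebra.counit_single (R := K) g c
  simp only [CommSemiring.counit_apply] at h
  exact h

variable (K G)

instance instBialgebra : Bialgebra K (MonoidAlgebra K G) :=
  MonoidAlgebra.instBialgebra K K G

end GroupBialgebra

end

noncomputable section

/-- The group algebra `K[Z_n]` of the cyclic group of order `n`. -/
abbrev GroupAlgZn (K : Type*) [CommRing K] (n : ℕ) : Type _ :=
  MonoidAlgebra K (Multiplicative (ZMod n))

/-- The canonical generator `x` of the group algebra `K[Z_n]`. -/
def xgen (K : Type*) [CommRing K] (n : ℕ) : GroupAlgZn K n :=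
  MonoidAlgebra.of K (Multiplicative (ZMod n)) (Multiplicative.ofAdd (1 : ZMod n))

/-- The idempotent `e_k = (1/n) ∑_{i=0}^{n-1} q^{-ik} x^i` in `K[Z_n]`. -/
def eIdem (K : Type*) [Field K] (n : ℕ) (q : K) (k : ZMod n) : GroupAlgZn K n :=
  (n : K)⁻¹ • ∑ i ∈ Finset.range n, (q ^ (i * k.val))⁻¹ • (xgen K n) ^ i

/-- `J ∈ R ⊗ R` is a twist for the bialgebra `R`: it is invertible, satisfies the twist
(2-cocycle) equation `(Δ ⊗ id)(J)(J ⊗ 1) = (id ⊗ Δ)(J)(1 ⊗ J)`, and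
`(ε ⊗ id)(J) = 1 = (id ⊗ ε)(J)`. -/
def IsTwist (K : Type*) [CommRing K] (R : Type*) [Ring R] [Bialgebra K R]
    (J : R ⊗[K] R) : Prop :=
  IsUnit J ∧
  (TensorProduct.assoc K R R R)
      ((LinearMap.rTensor R (Coalgebra.comul (R := K))) J * (J ⊗ₜ[K] (1 : R))) =
    (LinearMap.lTensor R (Coalgebra.comul (R := K))) J * ((1 : R) ⊗ₜ[K] J) ∧
  (TensorProduct.lid K R) ((LinearMap.rTensor R (Coalgebra.counit (R := K))) J) = 1 ∧
  (TensorProduct.rid K R) ((LinearMap.lTensor R (Coalgebra.counit (R := K))) J) = 1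

namespace TwistAux
variable {K : Type*} [Field K] {n : ℕ}

def sg (K : Type*) [Field K] (n : ℕ) (a : ZMod n) : GroupAlgZn K n :=
  MonoidAlgebra.single (Multiplicative.ofAdd a) (1 : K)

lemma sg_mul (a b : ZMod n) : sg K n a * sg K n b = sg K n (a + b) := by
  simp [sg, MonoidAlgebra.single_mul_single, ← ofAdd_add]

lemma sg_zero : sg K n 0 = 1 := by
  simp [sg, MonoidAlgebra.one_def, ofAdd_zero]

lemma xgen_pow (i : ℕ) : (xgen K n) ^ i = sg K n (i : ZMod n) := by
  rw [xgen, ← map_pow, sg]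
  simp [MonoidAlgebra.of_apply, ← ofAdd_nsmul, nsmul_eq_mul]

lemma pow_mod (hq1 : ∀ r : K, r ^ n = 1 → True) : True := trivial

lemma pow_mod' {r : K} (hr : r ^ n = 1) (m : ℕ) : r ^ (m % n) = r ^ m := by
  conv_rhs => rw [← Nat.div_add_mod m n, pow_add, pow_mul, hr, one_pow, one_mul]

def chi (q : K) (a : ZMod n) : K := q ^ a.val

lemma chi_natCast [NeZero n] {q : K} (hq1 : q ^ n = 1) (m : ℕ) :
    chi q ((m : ℕ) : ZMod n) = q ^ m := by
  rw [chi, ZMod.val_natCast, pow_mod' hq1]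

lemma chi_add [NeZero n] {q : K} (hq1 : q ^ n = 1) (a b : ZMod n) :
    chi q (a + b) = chi q a * chi q b := by
  rw [chi, ZMod.val_add, pow_mod' hq1, pow_add]; rfl

lemma chi_zero [NeZero n] (q : K) : chi q (0 : ZMod n) = 1 := by
  simp [chi, ZMod.val_zero]

lemma chi_neg [NeZero n] {q : K} (hq1 : q ^ n = 1) (a : ZMod n) :
    chi q (-a) = (chi q a)⁻¹ := by
  refine eq_inv_of_mul_eq_one_left ?_
  rw [← chi_add hq1, neg_add_cancel, chi_zero]

lemma chi_nsmul [NeZero n] {q : K} (hq1 : q ^ n = 1) (m : ℕ) (a : ZMod n) :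
    chi q (m • a) = chi q a ^ m := by
  induction m with
  | zero => simp [chi_zero]
  | succ m ih => rw [succ_nsmul, chi_add hq1, ih, pow_succ]

lemma sum_range_zmod [NeZero n] {M : Type*} [AddCommMonoid M] (f : ZMod n → M) :
    ∑ i ∈ Finset.range n, f ((i : ℕ) : ZMod n) = ∑ a : ZMod n, f a := by
  refine Finset.sum_nbij' (fun i => ((i : ℕ) : ZMod n)) (fun a => a.val) ?_ ?_ ?_ ?_ ?_
  · intro i hi; exact Finset.mem_univ _
  · intro a _; exact Finset.mem_range.2 (ZMod.val_lt a)
  · intro i hi; exact ZMod.val_cast_of_lt (Finset.mem_range.1 hi)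
  · intro a _; exact ZMod.natCast_rightInverse a
  · intro i hi; rfl

end TwistAux

namespace TwistAux
variable {K : Type*} [Field K] {n : ℕ}

lemma chi_eq_one_iff [NeZero n] {q : K} (hq : IsPrimitiveRoot q n) (a : ZMod n) :
    chi q a = 1 ↔ a = 0 := by
  constructor
  · intro h
    by_contra ha
    have hv : 0 < a.val := Nat.pos_of_ne_zero (fun h0 => ha (by
      have := ZMod.natCast_rightInverse (n := n) a
      rw [← this, h0, Nat.cast_zero]))
    exact hq.pow_ne_one_of_pos_of_lt hv.ne' (ZMod.val_lt a) h
  · rintro rfl; exact chi_zero q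

lemma chi_pow_n [NeZero n] {q : K} (hq1 : q ^ n = 1) (a : ZMod n) : chi q a ^ n = 1 := by
  rw [← chi_nsmul hq1, nsmul_eq_mul, ZMod.natCast_self, zero_mul, chi_zero]

lemma sum_chi [NeZero n] {q : K} (hq : IsPrimitiveRoot q n) (a : ZMod n) :
    ∑ i : ZMod n, chi q (i * a) = if a = 0 then (n : K) else 0 := by
  have hq1 : q ^ n = 1 := hq.pow_eq_one
  by_cases ha : a = 0
  · simp [ha, chi_zero, Finset.card_univ, ZMod.card]
  · rw [if_neg ha]
    have hterm : ∀ i : ZMod n, chi q (i * a) = chi q a ^ i.val := by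
      intro i
      conv_lhs => rw [← ZMod.natCast_rightInverse i]
      rw [← nsmul_eq_mul, chi_nsmul hq1]
    simp_rw [hterm]
    rw [← sum_range_zmod (fun b : ZMod n => chi q a ^ b.val)]
    have : ∀ i ∈ Finset.range n, chi q a ^ (((i : ℕ) : ZMod n)).val = chi q a ^ i := by
      intro i _
      rw [ZMod.val_natCast, pow_mod' (chi_pow_n hq1 a)]
    rw [Finset.sum_congr rfl this, geom_sum_eq, chi_pow_n hq1, sub_self, zero_div]
    rw [Ne, chi_eq_one_iff hq]; exact ha

end TwistAux


namespace TwistAux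
variable {K : Type u} [Field K] {n : ℕ}

def st (K : Type u) [Field K] (n : ℕ) (a b : ZMod n) :
    GroupAlgZn K n ⊗[K] GroupAlgZn K n := sg K n a ⊗ₜ[K] sg K n b

lemma st_mul (a b c d : ZMod n) : st K n a b * st K n c d = st K n (a + c) (b + d) := by
  simp [st, Algebra.TensorProduct.tmul_mul_tmul, sg_mul]

lemma st_one : st K n 0 0 = 1 := by
  simp [st, sg_zero, Algebra.TensorProduct.one_def]

lemma comul_st (a b : ZMod n) :
    Coalgebra.comul (R := K) (st K n a b) = st K n a b ⊗ₜ[K] st K n a b := by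
  rw [Bialgebra.TensorProduct.comul_eq_algHom_toLinearMap]
  simp only [st, sg, AlgHom.toLinearMap_apply, AlgHom.coe_comp, AlgEquiv.toAlgHom_eq_coe,
    AlgHom.coe_coe, Function.comp_apply, Algebra.TensorProduct.map_tmul]
  rw [show (Bialgebra.comulAlgHom K (GroupAlgZn K n)) (MonoidAlgebra.single (Multiplicative.ofAdd a) (1:K)) = Coalgebra.comul (R := K) (MonoidAlgebra.single (Multiplicative.ofAdd a) (1:K)) from by rw [← AlgHom.toLinearMap_apply, Bialgebra.toLinearMap_comulAlgHom]]
  rw [show (Bialgebra.comulAlgHom K (GroupAlgZn K n)) (MonoidAlgebra.single (Multiplicative.ofAdd b) (1:K)) = Coalgebra.comul (R := K) (MonoidAlgebra.single (Multiplicative.ofAdd b) (1:K)) from by rw [← AlgHom.toLinearMap_apply, Bialgebra.toLinearMap_comulAlgHom]]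
  rw [GroupBialgebra.comul_single, GroupBialgebra.comul_single]
  exact Algebra.TensorProduct.tensorTensorTensorComm_tmul _ _ _ _

lemma counit_st (a b : ZMod n) :
    Coalgebra.counit (R := K) (st K n a b) = (1 : K) := by
  rw [Bialgebra.TensorProduct.counit_eq_algHom_toLinearMap]
  simp only [st, sg, AlgHom.toLinearMap_apply, AlgHom.coe_comp, Function.comp_apply,
    Algebra.TensorProduct.map_tmul]
  rw [show (Bialgebra.counitAlgHom K (GroupAlgZn K n)) (MonoidAlgebra.single (Multiplicative.ofAdd a) (1:K)) = Coalgebra.counit (R := K) (MonoidAlgebra.single (Multiplicative.ofAdd a) (1:K)) from by rw [← AlgHom.toLinearMap_apply, Bialgebra.toLinearMap_counitAlgHom]]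
  rw [show (Bialgebra.counitAlgHom K (GroupAlgZn K n)) (MonoidAlgebra.single (Multiplicative.ofAdd b) (1:K)) = Coalgebra.counit (R := K) (MonoidAlgebra.single (Multiplicative.ofAdd b) (1:K)) from by rw [← AlgHom.toLinearMap_apply, Bialgebra.toLinearMap_counitAlgHom]]
  rw [GroupBialgebra.counit_single, GroupBialgebra.counit_single]
  simp

end TwistAux


namespace TwistAux
variable {K : Type u} [Field K] {n : ℕ}

lemma st_r (a : ZMod n) : sg K n a ⊗ₜ[K] (1 : GroupAlgZn K n) = st K n a 0 := by
  rw [st, sg_zero]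

lemma st_l (b : ZMod n) : (1 : GroupAlgZn K n) ⊗ₜ[K] sg K n b = st K n 0 b := by
  rw [st, sg_zero]

lemma coeff_eq [NeZero n] {q : K} (hq1 : q ^ n = 1) (i k : ℕ) :
    (q ^ (i * ((k : ℕ) : ZMod n).val))⁻¹ =
      chi q (-(((i : ℕ) : ZMod n) * ((k : ℕ) : ZMod n))) := by
  rw [chi_neg hq1, ← chi_natCast hq1 (i * ((k : ℕ) : ZMod n).val)]
  congr 2
  rw [Nat.cast_mul, ZMod.natCast_rightInverse]

lemma J'_eq [NeZero n] {q : K} (hq1 : q ^ n = 1) :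
    (TensorProduct.map
        (Algebra.TensorProduct.includeLeft :
          GroupAlgZn K n →ₐ[K] GroupAlgZn K n ⊗[K] GroupAlgZn K n).toLinearMap
        (Algebra.TensorProduct.includeRight :
          GroupAlgZn K n →ₐ[K] GroupAlgZn K n ⊗[K] GroupAlgZn K n).toLinearMap)
      (∑ k ∈ Finset.range n, (eIdem K n q ((k : ℕ) : ZMod n)) ⊗ₜ[K] ((xgen K n) ^ k)) =
    ∑ a : ZMod n, ∑ b : ZMod n,
      ((n : K)⁻¹ * chi q (-(a * b))) • (st K n a 0 ⊗ₜ[K] st K n 0 b) := by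
  rw [map_sum]
  have step : ∀ k ∈ Finset.range n,
      (TensorProduct.map
        (Algebra.TensorProduct.includeLeft :
          GroupAlgZn K n →ₐ[K] GroupAlgZn K n ⊗[K] GroupAlgZn K n).toLinearMap
        (Algebra.TensorProduct.includeRight :
          GroupAlgZn K n →ₐ[K] GroupAlgZn K n ⊗[K] GroupAlgZn K n).toLinearMap)
        ((eIdem K n q ((k : ℕ) : ZMod n)) ⊗ₜ[K] ((xgen K n) ^ k)) =
      ∑ i ∈ Finset.range n,
        ((n : K)⁻¹ * chi q (-(((i : ℕ) : ZMod n) * ((k : ℕ) : ZMod n)))) •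
          (st K n ((i : ℕ) : ZMod n) 0 ⊗ₜ[K] st K n 0 ((k : ℕ) : ZMod n)) := by
    intro k _
    rw [eIdem]
    simp only [xgen_pow, TensorProduct.smul_tmul', TensorProduct.sum_tmul, map_smul, map_sum,
      TensorProduct.map_tmul, AlgHom.toLinearMap_apply,
      Algebra.TensorProduct.includeLeft_apply, Algebra.TensorProduct.includeRight_apply,
      Finset.smul_sum, smul_smul, st_r, st_l]
    refine Finset.sum_congr rfl fun i _ => ?_
    rw [coeff_eq hq1]
  rw [Finset.sum_congr rfl step]
  rw [sum_range_zmod (fun b : ZMod n => ∑ i ∈ Finset.range n,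
    ((n : K)⁻¹ * chi q (-(((i : ℕ) : ZMod n) * b))) •
      (st K n ((i : ℕ) : ZMod n) 0 ⊗ₜ[K] st K n 0 b))]
  rw [Finset.sum_congr rfl (fun b _ => sum_range_zmod (fun a : ZMod n =>
    ((n : K)⁻¹ * chi q (-(a * b))) • (st K n a 0 ⊗ₜ[K] st K n 0 b)))]
  exact Finset.sum_comm

end TwistAux


section
set_option maxSynthPendingDepth 3
set_option maxHeartbeats 1000000

namespace TwistAux
variable {K : Type u} [Field K] {n : ℕ}

abbrev TT (K : Type u) [Field K] (n : ℕ) := GroupAlgZn K n ⊗[K] GroupAlgZn K n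

def Jc (q : K) (a b : ZMod n) : K := (n : K)⁻¹ * chi q (-(a * b))

def Jnf (K : Type u) [Field K] (n : ℕ) [NeZero n] (q : K) : TT K n ⊗[K] TT K n :=
  ∑ a : ZMod n, ∑ b : ZMod n, Jc q a b • (st K n a 0 ⊗ₜ[K] st K n 0 b)

lemma Jc_mul [NeZero n] {q : K} (hq1 : q ^ n = 1) (a b u v : ZMod n) :
    Jc q a b * Jc q u v = (n : K)⁻¹ * (n : K)⁻¹ * chi q (-(a * b) + -(u * v)) := by
  rw [Jc, Jc, chi_add hq1]; ring

lemma twist_eq [NeZero n] {q : K} (hq1 : q ^ n = 1) :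
    (TensorProduct.assoc K (TT K n) (TT K n) (TT K n))
      ((LinearMap.rTensor (TT K n) (Coalgebra.comul (R := K))) (Jnf K n q)
        * (Jnf K n q ⊗ₜ[K] (1 : TT K n))) =
    (LinearMap.lTensor (TT K n) (Coalgebra.comul (R := K))) (Jnf K n q)
      * ((1 : TT K n) ⊗ₜ[K] Jnf K n q) := by
  simp only [Jnf, map_sum, LinearMap.map_smul, map_smul, LinearMap.rTensor_tmul,
    LinearMap.lTensor_tmul,
    comul_st, TensorProduct.sum_tmul, TensorProduct.tmul_sum, ← TensorProduct.smul_tmul',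
    TensorProduct.tmul_smul, Finset.sum_mul, Finset.mul_sum, smul_mul_smul_comm,
    Algebra.TensorProduct.tmul_mul_tmul, st_mul, mul_one, one_mul,
    TensorProduct.assoc_tmul, Finset.smul_sum, mul_smul_comm, smul_mul_assoc,
    smul_smul, zero_add, add_zero]
  simp only [← Fintype.sum_prod_type']
  refine Fintype.sum_equiv
    ⟨fun p => (p.2.2.1, p.2.2.2 - p.2.1, p.1 + p.2.2.1, p.2.1),
     fun p => (p.2.2.1 - p.1, p.2.2.2, p.1, p.2.1 + p.2.2.2),
     by rintro ⟨a,b,c,d⟩; exact Prod.ext (by first | rfl | (dsimp only; ring)) (Prod.ext (by first | rfl | (dsimp only; ring))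
       (Prod.ext (by first | rfl | (dsimp only; ring)) (by first | rfl | (dsimp only; ring)))),
     by rintro ⟨a,b,c,d⟩; exact Prod.ext (by first | rfl | (dsimp only; ring)) (Prod.ext (by first | rfl | (dsimp only; ring))
       (Prod.ext (by first | rfl | (dsimp only; ring)) (by first | rfl | (dsimp only; ring))))⟩
    _ _ ?_
  rintro ⟨x, x1, x2, x3⟩
  simp only [Equiv.coe_fn_mk]
  have h1 : x1 + (x3 - x1) = x3 := by ring
  have h2 : x2 + x = x + x2 := by ring
  rw [h1, h2, Jc_mul hq1, Jc_mul hq1]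
  congr 2
  ring

lemma stt_one : st K n (0 : ZMod n) 0 ⊗ₜ[K] st K n (0 : ZMod n) 0 = (1 : TT K n ⊗[K] TT K n) := by
  rw [st_one]; rfl

lemma counit_left [NeZero n] {q : K} (hq : IsPrimitiveRoot q n) (hn0 : (n : K) ≠ 0) :
    (TensorProduct.lid K (TT K n))
      ((LinearMap.rTensor (TT K n) (Coalgebra.counit (R := K))) (Jnf K n q)) = 1 := by
  simp only [Jnf, map_sum, LinearMap.map_smul, map_smul, LinearMap.rTensor_tmul, counit_st,
    TensorProduct.lid_tmul, one_smul]
  rw [Finset.sum_comm]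
  simp_rw [← Finset.sum_smul, Jc, ← Finset.mul_sum]
  have harg : ∀ a b : ZMod n, -(a * b) = a * -b := fun a b => by ring
  simp_rw [harg]
  simp_rw [fun b => sum_chi hq (-b)]
  simp only [neg_eq_zero, mul_ite, mul_zero, ite_smul, zero_smul,
    Finset.sum_ite_eq', Finset.mem_univ, if_true]
  rw [inv_mul_cancel₀ hn0, one_smul, st_one]

lemma counit_right [NeZero n] {q : K} (hq : IsPrimitiveRoot q n) (hn0 : (n : K) ≠ 0) :
    (TensorProduct.rid K (TT K n))
      ((LinearMap.lTensor (TT K n) (Coalgebra.counit (R := K))) (Jnf K n q)) = 1 := by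
  simp only [Jnf, map_sum, LinearMap.map_smul, map_smul, LinearMap.lTensor_tmul, counit_st,
    TensorProduct.rid_tmul, one_smul]
  simp_rw [← Finset.sum_smul, Jc, ← Finset.mul_sum]
  have harg : ∀ a b : ZMod n, -(a * b) = b * -a := fun a b => by ring
  simp_rw [harg]
  simp_rw [fun a => sum_chi hq (-a)]
  simp only [neg_eq_zero, mul_ite, mul_zero, ite_smul, zero_smul,
    Finset.sum_ite_eq', Finset.mem_univ, if_true]
  rw [inv_mul_cancel₀ hn0, one_smul, st_one]

lemma mul_inv_eq_one [NeZero n] {q : K} (hq : IsPrimitiveRoot q n) (hn0 : (n : K) ≠ 0) :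
    Jnf K n q * (∑ a : ZMod n, ∑ b : ZMod n,
      ((n : K)⁻¹ * chi q (a * b)) • (st K n a 0 ⊗ₜ[K] st K n 0 b)) = 1 := by
  have hq1 : q ^ n = 1 := hq.pow_eq_one
  have expand : Jnf K n q * (∑ a : ZMod n, ∑ b : ZMod n,
      ((n : K)⁻¹ * chi q (a * b)) • (st K n a 0 ⊗ₜ[K] st K n 0 b)) =
      ∑ p : ZMod n × ZMod n × ZMod n × ZMod n,
        (Jc q p.2.2.1 p.2.2.2 * ((n : K)⁻¹ * chi q (p.1 * p.2.1))) •
          (st K n (p.2.2.1 + p.1) 0 ⊗ₜ[K] st K n 0 (p.2.2.2 + p.2.1)) := by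
    simp only [Jnf, Finset.sum_mul, Finset.mul_sum, smul_mul_smul_comm,
      Algebra.TensorProduct.tmul_mul_tmul, st_mul, add_zero, zero_add,
      Fintype.sum_prod_type]
  rw [expand]
  rw [← Equiv.sum_comp
    (⟨fun p => (p.1 - p.2.2.1, p.2.1 - p.2.2.2, p.2.2.1, p.2.2.2),
      fun p => (p.1 + p.2.2.1, p.2.1 + p.2.2.2, p.2.2.1, p.2.2.2),
      by rintro ⟨a,b,c,d⟩; exact Prod.ext (by first | rfl | (dsimp only; ring)) (Prod.ext (by first | rfl | (dsimp only; ring))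
        (Prod.ext (by first | rfl | (dsimp only; ring)) (by first | rfl | (dsimp only; ring)))),
      by rintro ⟨a,b,c,d⟩; exact Prod.ext (by first | rfl | (dsimp only; ring)) (Prod.ext (by first | rfl | (dsimp only; ring))
        (Prod.ext (by first | rfl | (dsimp only; ring)) (by first | rfl | (dsimp only; ring))))⟩
      : ZMod n × ZMod n × ZMod n × ZMod n ≃ ZMod n × ZMod n × ZMod n × ZMod n)
    (fun p => (Jc q p.2.2.1 p.2.2.2 * ((n : K)⁻¹ * chi q (p.1 * p.2.1))) •
          (st K n (p.2.2.1 + p.1) 0 ⊗ₜ[K] st K n 0 (p.2.2.2 + p.2.1)))]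
  have key : ∀ p : ZMod n × ZMod n × ZMod n × ZMod n,
      (Jc q p.2.2.1 p.2.2.2 * ((n : K)⁻¹ *
          chi q ((p.1 - p.2.2.1) * (p.2.1 - p.2.2.2)))) •
        (st K n (p.2.2.1 + (p.1 - p.2.2.1)) 0 ⊗ₜ[K]
          st K n 0 (p.2.2.2 + (p.2.1 - p.2.2.2))) =
      (((n : K)⁻¹ * (n : K)⁻¹ * chi q (p.1 * p.2.1)) *
          (chi q (p.2.2.1 * -p.2.1) * chi q (p.2.2.2 * -p.1))) •
        (st K n p.1 0 ⊗ₜ[K] st K n 0 p.2.1) := by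
    rintro ⟨A, B, a, b⟩
    dsimp only
    have h1 : a + (A - a) = A := by ring
    have h2 : b + (B - b) = B := by ring
    rw [h1, h2, Jc]
    congr 1
    have e1 : chi q (A * B) * (chi q (a * -B) * chi q (b * -A)) =
        chi q (-(a * b)) * chi q ((A - a) * (B - b)) := by
      rw [← chi_add hq1, ← chi_add hq1, ← chi_add hq1]
      congr 1
      ring
    calc (n : K)⁻¹ * chi q (-(a * b)) * ((n : K)⁻¹ * chi q ((A - a) * (B - b)))
        = (n : K)⁻¹ * (n : K)⁻¹ *
            (chi q (-(a * b)) * chi q ((A - a) * (B - b))) := by ring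
      _ = (n : K)⁻¹ * (n : K)⁻¹ *
            (chi q (A * B) * (chi q (a * -B) * chi q (b * -A))) := by rw [e1]
      _ = ((n : K)⁻¹ * (n : K)⁻¹ * chi q (A * B)) *
            (chi q (a * -B) * chi q (b * -A)) := by ring
  simp only [Equiv.coe_fn_mk]
  rw [Fintype.sum_congr _ _ key]
  simp only [Fintype.sum_prod_type]
  simp_rw [← Finset.sum_smul, ← Finset.mul_sum, ← Finset.sum_mul, sum_chi hq]
  simp only [neg_eq_zero, mul_ite, ite_mul, mul_zero, zero_mul, ite_smul, zero_smul,
    Finset.sum_ite_eq', Finset.mem_univ, if_true]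
  rw [Finset.sum_eq_single (0 : ZMod n) (fun b _ hb => by simp [hb])
    (fun h => absurd (Finset.mem_univ 0) h)]
  rw [Finset.sum_eq_single (0 : ZMod n) (fun b _ hb => by simp [hb])
    (fun h => absurd (Finset.mem_univ 0) h)]
  simp only [eq_self_iff_true, if_true]
  rw [zero_mul, chi_zero, stt_one,
    show (n : K)⁻¹ * (n : K)⁻¹ * 1 * ((n : K) * (n : K)) = 1 from by field_simp, one_smul]

lemma inv_mul_eq_one' [NeZero n] {q : K} (hq : IsPrimitiveRoot q n) (hn0 : (n : K) ≠ 0) :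
    (∑ a : ZMod n, ∑ b : ZMod n,
      ((n : K)⁻¹ * chi q (a * b)) • (st K n a 0 ⊗ₜ[K] st K n 0 b)) * Jnf K n q = 1 := by
  rw [mul_comm]; exact mul_inv_eq_one hq hn0

end TwistAux
end
/-- `J' = (e₁ ⊗ e₂)(J) = ∑_k (e_k ⊗ 1) ⊗ (1 ⊗ x^k)` is a twist for the
bialgebra `B ⊗ B`, where `B = K[Z_n]`. -/
theorem J'_isTwist_for_BtensorB (K : Type u) [Field K] [CharZero K] (n : ℕ) (hn : 2 ≤ n)
    (q : K) (hq : IsPrimitiveRoot q n) :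
    let B := GroupAlgZn K n
    let J : B ⊗[K] B :=
      ∑ k ∈ Finset.range n, (eIdem K n q ((k : ℕ) : ZMod n)) ⊗ₜ[K] ((xgen K n) ^ k)
    let J' : (B ⊗[K] B) ⊗[K] (B ⊗[K] B) :=
      (TensorProduct.map (Algebra.TensorProduct.includeLeft : B →ₐ[K] B ⊗[K] B).toLinearMap
        (Algebra.TensorProduct.includeRight : B →ₐ[K] B ⊗[K] B).toLinearMap) J
    IsTwist K (B ⊗[K] B) J' := by
  intro B J J'
  haveI : NeZero n := ⟨by omega⟩
  have hq1 : q ^ n = 1 := hq.pow_eq_one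
  have hn0 : (n : K) ≠ 0 := Nat.cast_ne_zero.mpr (by omega)
  have hJ' : J' = TwistAux.Jnf K n q := TwistAux.J'_eq hq1
  rw [hJ']
  exact ⟨⟨⟨_, _, TwistAux.mul_inv_eq_one hq hn0,
    TwistAux.inv_mul_eq_one' hq hn0⟩, rfl⟩,
    TwistAux.twist_eq hq1, TwistAux.counit_left hq hn0, TwistAux.counit_right hq hn0⟩
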